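/- Let a = cosθ e₁ + sinθ e₂, b = cosθ e₁ − sinθ e₂ with 0 < θ < π/2 and let γ satisfy 1/(cosθ+sinθ) < γ ≤ 1. Then the generalized incompatibility robustness of the noisy unbiased qubit measurements A_{γa}(±) = (I ± γ a·σ)/2 and B_{γb}(±) = (I ± γ b·σ)/2 equals η^g(A_{γa}, B_{γb}) = (√2+1)/(√2 + γ(cosθ+sinθ)). -/

import Mathlib

open Matrix Complex Finset
open scoped ComplexOrder

noncomputable section

def σ1 : Matrix (Fin 2) (Fin 2) ℂ := !![0, 1; 1, 0]
def σ2 : Matrix (Fin 2) (Fin 2) ℂ := !![0, -Complex.I; Complex.I, 0]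
def σ3 : Matrix (Fin 2) (Fin 2) ℂ := !![1, 0; 0, -1]

/-- `v·σ = v₁σ₁ + v₂σ₂ + v₃σ₃` -/
def dotσ (v : Fin 3 → ℝ) : Matrix (Fin 2) (Fin 2) ℂ :=
  (v 0 : ℂ) • σ1 + (v 1 : ℂ) • σ2 + (v 2 : ℂ) • σ3

/-- A POVM: positive semidefinite effects summing to the identity. -/
def IsPOVM {d : ℕ} {X : Type} [Fintype X] (A : X → Matrix (Fin d) (Fin d) ℂ) : Prop :=
  (∀ x, (A x).PosSemidef) ∧ ∑ x, A x = 1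

/-- Compatibility: existence of a joint POVM with the given margins. -/
def Compatible {d : ℕ} {X Y : Type} [Fintype X] [Fintype Y]
    (A : X → Matrix (Fin d) (Fin d) ℂ) (B : Y → Matrix (Fin d) (Fin d) ℂ) : Prop :=
  ∃ J : X × Y → Matrix (Fin d) (Fin d) ℂ, IsPOVM J ∧
    (∀ x, A x = ∑ y, J (x, y)) ∧ (∀ y, B y = ∑ x, J (x, y))

/-- The generalized incompatibility robustness. -/
def etaG {d : ℕ} {X Y : Type} [Fintype X] [Fintype Y]
    (A : X → Matrix (Fin d) (Fin d) ℂ) (B : Y → Matrix (Fin d) (Fin d) ℂ) : ℝ :=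
  sSup {η : ℝ | η ∈ Set.Icc 0 1 ∧ ∃ C D, IsPOVM C ∧ IsPOVM D ∧
    Compatible (fun x => (η : ℂ) • A x + ((1 - η : ℝ) : ℂ) • C x)
      (fun y => (η : ℂ) • B y + ((1 - η : ℝ) : ℂ) • D y)}

/-- The qubit operator `(I + z v·σ)/2`. -/
def st (v : Fin 3 → ℝ) (z : ℝ) : Matrix (Fin 2) (Fin 2) ℂ :=
  ((1 : ℂ) / 2) • ((1 : Matrix (Fin 2) (Fin 2) ℂ) + (z : ℂ) • dotσ v)

/-- `u_a = (e₁+e₂)/√2`. -/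
def ua : Fin 3 → ℝ := ![1 / Real.sqrt 2, 1 / Real.sqrt 2, 0]

/-- `u_b = (e₁−e₂)/√2`. -/
def ub : Fin 3 → ℝ := ![1 / Real.sqrt 2, -(1 / Real.sqrt 2), 0]

/-- The sign associated with a Boolean outcome (`true ↦ +1`, `false ↦ −1`). -/
def sgn (z : Bool) : ℝ := if z then 1 else -1

/-- Success probability of the discrimination task for the ensemble with Bloch vectors
`±u_a, ±u_b` and dichotomic measurements `C, D`. -/
def Psucc (C D : Bool → Matrix (Fin 2) (Fin 2) ℂ) : ℝ :=
  (1 / 4) * ∑ z : Bool, ((st ua (sgn z) * C z).trace.re + (st ub (sgn z) * D z).trace.re)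

lemma dotσ_apply (v : Fin 3 → ℝ) :
    dotσ v = !![(v 2 : ℂ), (v 0 : ℂ) - (v 1 : ℂ) * Complex.I;
                (v 0 : ℂ) + (v 1 : ℂ) * Complex.I, -(v 2 : ℂ)] := by
  ext i j
  fin_cases i <;> fin_cases j <;>
    simp [dotσ, σ1, σ2, σ3] <;> ring

lemma st_apply (v : Fin 3 → ℝ) (z : ℝ) :
    st v z = !![(1 + z * v 2 : ℂ)/2, ((z:ℂ) * v 0 - z * v 1 * Complex.I)/2;
                ((z:ℂ) * v 0 + z * v 1 * Complex.I)/2, (1 - z * v 2 : ℂ)/2] := by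
  rw [st, dotσ_apply]
  ext i j
  fin_cases i <;> fin_cases j <;>
    simp [Matrix.one_apply] <;> ring

lemma psd_gen (c : ℝ) (v : Fin 3 → ℝ) (hc : 0 ≤ c) (h : v 0^2 + v 1^2 + v 2^2 ≤ c^2) :
    ((c:ℂ) • 1 + dotσ v).PosSemidef := by
  refine Matrix.PosSemidef.of_dotProduct_mulVec_nonneg ?_ ?_
  · rw [Matrix.IsHermitian, dotσ_apply]
    ext i j
    fin_cases i <;> fin_cases j <;>
      simp [Matrix.conjTranspose_apply, Matrix.one_apply, Complex.ext_iff]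
  · intro x
    rw [dotσ_apply]
    rw [Complex.le_def]
    constructor
    all_goals simp [dotProduct, Matrix.mulVec, Fin.sum_univ_succ, Matrix.one_apply, Complex.ext_iff,
        Complex.add_re, Complex.mul_re]
    · set p1 := (x 0).re; set p2 := (x 0).im; set q1 := (x 1).re; set q2 := (x 1).im
      set P := p1^2 + p2^2 with hP
      set Q := q1^2 + q2^2 with hQ
      set r := p1*q1 + p2*q2 with hr
      set s := p1*q2 - p2*q1 with hs
      have hw : 4*r^2 + 4*s^2 + (P-Q)^2 = (P+Q)^2 := by rw [hr, hs, hP, hQ]; ring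
      have hPQ : (0:ℝ) ≤ P + Q := by positivity
      have key : (2*(v 0)*r + 2*(v 1)*s + (v 2)*(P-Q))^2 ≤ (c*(P+Q))^2 := by
        nlinarith [sq_nonneg (v 0 * (2*s) - v 1 * (2*r)), sq_nonneg (v 0 * (P-Q) - v 2 * (2*r)),
          sq_nonneg (v 1 * (P-Q) - v 2 * (2*s)), sq_nonneg (P+Q), mul_nonneg hPQ hPQ,
          mul_le_mul_of_nonneg_right h (mul_nonneg hPQ hPQ)]
      have key2 := (abs_le_of_sq_le_sq' key (mul_nonneg hc hPQ)).1
      rw [hr, hs, hP, hQ] at key2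
      linarith [key2]
    · ring_nf

lemma trace_st_mul_st (u v : Fin 3 → ℝ) (s t : ℝ) :
    (st u s * st v t).trace =
      (((1 + s*t*(u 0*v 0 + u 1*v 1 + u 2*v 2))/2 : ℝ) : ℂ) := by
  rw [st_apply, st_apply]
  simp [Matrix.trace_fin_two, Matrix.mul_apply, Fin.sum_univ_succ, Complex.ext_iff]
  constructor <;> ring

section
open scoped MatrixOrder
lemma trace_psd_mul_nonneg {n : ℕ} {P Q : Matrix (Fin n) (Fin n) ℂ}
    (hP : P.PosSemidef) (hQ : Q.PosSemidef) : 0 ≤ (P * Q).trace := by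
  have h1 : P * Q = CFC.sqrt P * (CFC.sqrt P * Q) := by
    rw [← Matrix.mul_assoc, CFC.sqrt_mul_sqrt_self P (nonneg_iff_posSemidef.mpr hP)]
  rw [h1, Matrix.trace_mul_comm]
  have h2 : CFC.sqrt P * Q * CFC.sqrt P = (CFC.sqrt P).conjTranspose * Q * CFC.sqrt P := by
    rw [(nonneg_iff_posSemidef.mp (CFC.sqrt_nonneg P)).1.eq]
  rw [Matrix.mul_assoc, ← Matrix.mul_assoc, h2]
  have h3 := hQ.conjTranspose_mul_mul_same (CFC.sqrt P)
  rw [Matrix.trace]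
  apply Finset.sum_nonneg
  intro i _
  have := h3.dotProduct_mulVec_nonneg (Pi.single i 1)
  simpa [dotProduct, Matrix.mulVec, Pi.single_apply, Matrix.diag] using this
end

lemma st_add_st_neg (v : Fin 3 → ℝ) (z : ℝ) : st v z + st v (-z) = 1 := by
  rw [st_apply, st_apply]
  ext i j
  fin_cases i <;> fin_cases j <;> simp [Matrix.one_apply] <;> ring

lemma psd_smul_st (r : ℝ) (hr : 0 ≤ r) (v : Fin 3 → ℝ) (z : ℝ)
    (h : z^2 * (v 0^2 + v 1^2 + v 2^2) ≤ 1) : ((r:ℂ) • st v z).PosSemidef := by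
  have key : (r:ℂ) • st v z = ((r/2 : ℝ) : ℂ) • 1 + dotσ (fun i => r*z/2 * v i) := by
    rw [st_apply, dotσ_apply]
    ext i j
    fin_cases i <;> fin_cases j <;> simp [Matrix.one_apply] <;> push_cast <;> ring
  rw [key]
  apply psd_gen _ _ (by positivity)
  have : (r*z/2)^2 * (v 0^2 + v 1^2 + v 2^2) ≤ (r/2)^2 := by
    have h4 : (r/2)^2 * (z^2 * (v 0^2 + v 1^2 + v 2^2)) ≤ (r/2)^2 * 1 :=
      mul_le_mul_of_nonneg_left h (by positivity)
    nlinarith [h4]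
  nlinarith [this]

lemma st_combo (r : ℝ) (v w : Fin 3 → ℝ) (z : ℝ) :
    ((r:ℝ):ℂ) • st v z + ((1-r:ℝ):ℂ) • st w z
      = st (fun i => r * v i + (1-r) * w i) z := by
  rw [st_apply, st_apply, st_apply]
  ext i j
  fin_cases i <;> fin_cases j <;> simp <;> push_cast <;> ring

lemma st_neg (v : Fin 3 → ℝ) (z : ℝ) : st (fun i => -(v i)) z = st v (-z) := by
  rw [st_apply, st_apply]
  ext i j
  fin_cases i <;> fin_cases j <;> simp <;> push_cast <;> ring

lemma st_eq_of_eq (v w : Fin 3 → ℝ) (z : ℝ) (h : ∀ i, v i = w i) : st v z = st w z := by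
  have : v = w := funext h
  rw [this]

lemma sgn_sq (z : Bool) : sgn z * sgn z = 1 := by cases z <;> norm_num [sgn]

lemma isPOVM_st_pair (v : Fin 3 → ℝ) (h : v 0^2 + v 1^2 + v 2^2 ≤ 1) :
    (∀ z : Bool, (st v (sgn z)).PosSemidef) ∧ st v (sgn true) + st v (sgn false) = 1 := by
  constructor
  · intro z
    have := psd_smul_st 1 zero_le_one v (sgn z) (by
      have := sgn_sq z
      nlinarith [h, sgn_sq z])
    simpa using this
  · have : sgn false = -(sgn true) := by norm_num [sgn]
    rw [this]
    exact st_add_st_neg v (sgn true)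

/-- The operator bound: `(1+1/√2)•1 - (st ua s + st ub t)` is PSD for `s,t = ±1`. -/
lemma bound_psd (x y : Bool) :
    (((1 + 1/Real.sqrt 2 : ℝ) : ℂ) • 1 - (st ua (sgn x) + st ub (sgn y))).PosSemidef := by
  have h2 : Real.sqrt 2 ^ 2 = 2 := Real.sq_sqrt (by norm_num)
  have hs2 : (0:ℝ) < Real.sqrt 2 := Real.sqrt_pos.mpr (by norm_num)
  have key : (((1 + 1/Real.sqrt 2 : ℝ) : ℂ) • 1 - (st ua (sgn x) + st ub (sgn y)))
      = (((1/Real.sqrt 2 : ℝ)):ℂ) • 1 +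
        dotσ (fun i => -((sgn x) * ua i + (sgn y) * ub i)/2) := by
    rw [st_apply, st_apply, dotσ_apply]
    ext i j
    fin_cases i <;> fin_cases j <;>
      simp [Matrix.one_apply, ua, ub] <;> push_cast <;> ring
  rw [key]
  apply psd_gen _ _ (by positivity)
  cases x <;> cases y <;> simp [ua, ub, sgn] <;>
    nlinarith [h2, hs2, sq_nonneg (Real.sqrt 2)]

lemma ua_norm : ua 0 ^ 2 + ua 1 ^ 2 + ua 2 ^ 2 = 1 := by
  have h2 : Real.sqrt 2 ^ 2 = 2 := Real.sq_sqrt (by norm_num)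
  simp [ua, div_pow, h2]
  norm_num

lemma ub_norm : ub 0 ^ 2 + ub 1 ^ 2 + ub 2 ^ 2 = 1 := by
  have h2 : Real.sqrt 2 ^ 2 = 2 := Real.sq_sqrt (by norm_num)
  simp [ub, div_pow, h2]
  norm_num

lemma ub_main (θ γ η : ℝ) (hη0 : 0 ≤ η) (hη1 : η ≤ 1)
    (C D : Bool → Matrix (Fin 2) (Fin 2) ℂ) (hC : IsPOVM C) (hD : IsPOVM D)
    (hcomp : Compatible
      (fun x => (η:ℂ) • st (γ • ![Real.cos θ, Real.sin θ, 0]) (sgn x) + ((1-η:ℝ):ℂ) • C x)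
      (fun y => (η:ℂ) • st (γ • ![Real.cos θ, -Real.sin θ, 0]) (sgn y) + ((1-η:ℝ):ℂ) • D y)) :
    η * (2 + Real.sqrt 2 * γ * (Real.cos θ + Real.sin θ)) ≤ 2 + Real.sqrt 2 := by
  set sq2 := Real.sqrt 2 with hsq2def
  have h2 : sq2 ^ 2 = 2 := Real.sq_sqrt (by norm_num)
  have hsq2 : (0:ℝ) < sq2 := Real.sqrt_pos.mpr (by norm_num)
  obtain ⟨J, ⟨hJpsd, hJsum⟩, hJA, hJB⟩ := hcomp
  have hpsdua : ∀ x : Bool, (st ua (sgn x)).PosSemidef :=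
    (isPOVM_st_pair ua (le_of_eq ua_norm)).1
  have hpsdub : ∀ y : Bool, (st ub (sgn y)).PosSemidef :=
    (isPOVM_st_pair ub (le_of_eq ub_norm)).1
  -- per-pair bound
  have hkey : ∀ x y : Bool, ((st ua (sgn x) + st ub (sgn y)) * J (x,y)).trace ≤
      (((1 + 1/sq2 : ℝ):ℂ)) * (J (x,y)).trace := by
    intro x y
    have h0 : 0 ≤ (((((1 + 1/sq2 : ℝ):ℂ)) • 1 - (st ua (sgn x) + st ub (sgn y))) * J (x,y)).trace :=
      trace_psd_mul_nonneg (bound_psd x y) (hJpsd _)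
    rw [Matrix.sub_mul, Matrix.smul_mul, Matrix.one_mul, Matrix.trace_sub, Matrix.trace_smul] at h0
    rw [smul_eq_mul] at h0
    exact sub_nonneg.mp h0
  -- total trace of J is 2
  have hsum2 : ∑ x : Bool, ∑ y : Bool, (J (x,y)).trace = 2 := by
    have h1 : ∑ x : Bool, ∑ y : Bool, (J (x,y)).trace = (∑ p : Bool × Bool, J p).trace := by
      rw [Fintype.sum_prod_type]
      simp [Matrix.trace_sum]
    rw [h1, hJsum]
    simp [Matrix.trace_one]
  -- upper bound on the discrimination functional
  have hT : (∑ x : Bool, (st ua (sgn x) *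
        ((η:ℂ) • st (γ • ![Real.cos θ, Real.sin θ, 0]) (sgn x) + ((1-η:ℝ):ℂ) • C x)).trace)
      + (∑ y : Bool, (st ub (sgn y) *
        ((η:ℂ) • st (γ • ![Real.cos θ, -Real.sin θ, 0]) (sgn y) + ((1-η:ℝ):ℂ) • D y)).trace)
      ≤ ((2 + sq2 : ℝ):ℂ) := by
    have hA' : ∀ x : Bool, (η:ℂ) • st (γ • ![Real.cos θ, Real.sin θ, 0]) (sgn x)
        + ((1-η:ℝ):ℂ) • C x = ∑ y : Bool, J (x, y) := fun x => hJA x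
    have hB' : ∀ y : Bool, (η:ℂ) • st (γ • ![Real.cos θ, -Real.sin θ, 0]) (sgn y)
        + ((1-η:ℝ):ℂ) • D y = ∑ x : Bool, J (x, y) := fun y => hJB y
    calc (∑ x : Bool, (st ua (sgn x) *
        ((η:ℂ) • st (γ • ![Real.cos θ, Real.sin θ, 0]) (sgn x) + ((1-η:ℝ):ℂ) • C x)).trace)
      + (∑ y : Bool, (st ub (sgn y) *
        ((η:ℂ) • st (γ • ![Real.cos θ, -Real.sin θ, 0]) (sgn y) + ((1-η:ℝ):ℂ) • D y)).trace)
        = ∑ x : Bool, ∑ y : Bool, ((st ua (sgn x) + st ub (sgn y)) * J (x,y)).trace := by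
          simp_rw [hA', hB', Matrix.mul_sum, Matrix.trace_sum]
          rw [Finset.sum_comm (s := Finset.univ) (t := Finset.univ)
            (f := fun y x => (st ub (sgn y) * J (x, y)).trace)]
          rw [← Finset.sum_add_distrib]
          congr 1; ext x
          rw [← Finset.sum_add_distrib]
          congr 1; ext y
          rw [Matrix.add_mul, Matrix.trace_add]
      _ ≤ ∑ x : Bool, ∑ y : Bool, (((1 + 1/sq2 : ℝ):ℂ)) * (J (x,y)).trace := by
          apply Finset.sum_le_sum; intro x _
          apply Finset.sum_le_sum; intro y _
          exact hkey x y
      _ = (((1 + 1/sq2 : ℝ):ℂ)) * ∑ x : Bool, ∑ y : Bool, (J (x,y)).trace := by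
          simp_rw [← Finset.mul_sum]
      _ = ((2 + sq2 : ℝ):ℂ) := by
          rw [hsum2]
          push_cast
          have : (sq2:ℂ) ≠ 0 := by exact_mod_cast hsq2.ne'
          field_simp
          ring_nf
          norm_cast
          nlinarith [h2]
  -- signal traces
  have htrA : ∀ x : Bool, (st ua (sgn x) * st (γ • ![Real.cos θ, Real.sin θ, 0]) (sgn x)).trace
      = (((1 + γ*(Real.cos θ + Real.sin θ)/sq2)/2 : ℝ):ℂ) := by
    intro x
    rw [trace_st_mul_st]
    congr 1
    simp [ua, sgn_sq x]
    ring
  have htrB : ∀ y : Bool, (st ub (sgn y) * st (γ • ![Real.cos θ, -Real.sin θ, 0]) (sgn y)).trace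
      = (((1 + γ*(Real.cos θ + Real.sin θ)/sq2)/2 : ℝ):ℂ) := by
    intro y
    rw [trace_st_mul_st]
    congr 1
    simp [ub, sgn_sq y]
    ring
  have htrC : ∀ x : Bool, 0 ≤ (st ua (sgn x) * C x).trace :=
    fun x => trace_psd_mul_nonneg (hpsdua x) (hC.1 x)
  have htrD : ∀ y : Bool, 0 ≤ (st ub (sgn y) * D y).trace :=
    fun y => trace_psd_mul_nonneg (hpsdub y) (hD.1 y)
  -- expand the functional
  have hexp : (∑ x : Bool, (st ua (sgn x) *
        ((η:ℂ) • st (γ • ![Real.cos θ, Real.sin θ, 0]) (sgn x) + ((1-η:ℝ):ℂ) • C x)).trace)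
      + (∑ y : Bool, (st ub (sgn y) *
        ((η:ℂ) • st (γ • ![Real.cos θ, -Real.sin θ, 0]) (sgn y) + ((1-η:ℝ):ℂ) • D y)).trace)
      = (η:ℂ) * (((2 * (1 + γ*(Real.cos θ + Real.sin θ)/sq2)) : ℝ):ℂ)
        + ((1-η:ℝ):ℂ) * ((∑ x : Bool, (st ua (sgn x) * C x).trace)
            + (∑ y : Bool, (st ub (sgn y) * D y).trace)) := by
    simp_rw [Matrix.mul_add, Matrix.trace_add, Matrix.mul_smul, Matrix.trace_smul, smul_eq_mul,
      Finset.sum_add_distrib, htrA, htrB]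
    rw [← Finset.mul_sum, ← Finset.mul_sum]
    simp only [Fintype.sum_bool]
    push_cast
    ring
  rw [hexp] at hT
  have hNn : 0 ≤ ((1-η:ℝ):ℂ) * ((∑ x : Bool, (st ua (sgn x) * C x).trace)
      + (∑ y : Bool, (st ub (sgn y) * D y).trace)) := by
    apply mul_nonneg
    · exact Complex.zero_le_real.mpr (by linarith)
    · exact add_nonneg (Finset.sum_nonneg fun x _ => htrC x) (Finset.sum_nonneg fun y _ => htrD y)
  have hfin : ((η * (2 * (1 + γ*(Real.cos θ + Real.sin θ)/sq2)) : ℝ):ℂ) ≤ ((2 + sq2 : ℝ):ℂ) := by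
    rw [Complex.ofReal_mul]
    calc (η:ℂ) * (((2 * (1 + γ*(Real.cos θ + Real.sin θ)/sq2)) : ℝ):ℂ)
        ≤ (η:ℂ) * (((2 * (1 + γ*(Real.cos θ + Real.sin θ)/sq2)) : ℝ):ℂ)
          + ((1-η:ℝ):ℂ) * ((∑ x : Bool, (st ua (sgn x) * C x).trace)
            + (∑ y : Bool, (st ub (sgn y) * D y).trace)) := le_add_of_nonneg_right hNn
      _ ≤ ((2 + sq2 : ℝ):ℂ) := hT
  have hfinR : η * (2 * (1 + γ*(Real.cos θ + Real.sin θ)/sq2)) ≤ 2 + sq2 :=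
    Complex.real_le_real.mp hfin
  have heq : η * (2 + sq2 * γ * (Real.cos θ + Real.sin θ))
      = η * (2 * (1 + γ*(Real.cos θ + Real.sin θ)/sq2)) := by
    field_simp
    linear_combination η * γ * (Real.cos θ + Real.sin θ) * h2
  rw [heq]
  exact hfinR

lemma isPOVM_st (v : Fin 3 → ℝ) (h : v 0^2 + v 1^2 + v 2^2 ≤ 1) :
    IsPOVM (fun z : Bool => st v (sgn z)) := by
  obtain ⟨h1, h2⟩ := isPOVM_st_pair v h
  refine ⟨h1, ?_⟩
  rw [Fintype.sum_bool]
  exact h2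

lemma mem_lemma (θ γ : ℝ) (hθ0 : 0 < θ) (hθ1 : θ < Real.pi/2) (hγ1 : γ ≤ 1)
    (hγ : 1/(Real.cos θ + Real.sin θ) < γ) :
    ∃ C D, IsPOVM C ∧ IsPOVM D ∧ Compatible
      (fun x : Bool =>
        (((Real.sqrt 2+1)/(Real.sqrt 2 + γ*(Real.cos θ + Real.sin θ)) : ℝ):ℂ) •
          st (γ • ![Real.cos θ, Real.sin θ, 0]) (sgn x) +
        ((1 - (Real.sqrt 2+1)/(Real.sqrt 2 + γ*(Real.cos θ + Real.sin θ)) : ℝ):ℂ) • C x)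
      (fun y : Bool =>
        (((Real.sqrt 2+1)/(Real.sqrt 2 + γ*(Real.cos θ + Real.sin θ)) : ℝ):ℂ) •
          st (γ • ![Real.cos θ, -Real.sin θ, 0]) (sgn y) +
        ((1 - (Real.sqrt 2+1)/(Real.sqrt 2 + γ*(Real.cos θ + Real.sin θ)) : ℝ):ℂ) • D y) := by
  set sq2 := Real.sqrt 2 with hsq2def
  have h2 : sq2 ^ 2 = 2 := Real.sq_sqrt (by norm_num)
  have hsq2 : (0:ℝ) < sq2 := Real.sqrt_pos.mpr (by norm_num)
  have hc : 0 < Real.cos θ := Real.cos_pos_of_mem_Ioo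
    ⟨by linarith [Real.pi_pos], hθ1⟩
  have hs : 0 < Real.sin θ := Real.sin_pos_of_pos_of_lt_pi hθ0 (by linarith [Real.pi_pos])
  set S := Real.cos θ + Real.sin θ with hSdef
  have hS : 0 < S := by positivity
  have hγ0 : 0 < γ := lt_trans (by positivity) hγ
  have hγS : 1 < γ * S := by
    rw [div_lt_iff₀ hS] at hγ
    linarith
  set d := sq2 + γ * S with hddef
  have hd : 0 < d := by positivity
  set η₀ := (sq2+1)/d with hη₀def
  set e1 := ((sq2+1)*γ*Real.cos θ*sq2 - (γ*S - 1)) / (sq2*d) with he1def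
  set e2 := ((sq2+1)*γ*Real.sin θ*sq2 - (γ*S - 1)) / (sq2*d) with he2def
  have hγs1 : γ * Real.sin θ ≤ 1 := mul_le_one₀ hγ1 hs.le (Real.sin_le_one θ)
  have hγc1 : γ * Real.cos θ ≤ 1 := mul_le_one₀ hγ1 hc.le (Real.cos_le_one θ)
  have he1 : 0 ≤ e1 := by
    apply div_nonneg _ (by positivity)
    have hnum : (sq2+1)*γ*Real.cos θ*sq2 - (γ*S - 1)
        = γ*Real.cos θ*(1+sq2) + (1 - γ*Real.sin θ) := by
      rw [hSdef]; linear_combination (γ*Real.cos θ)*h2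
    rw [hnum]
    have : 0 ≤ γ*Real.cos θ*(1+sq2) := by positivity
    linarith
  have he2 : 0 ≤ e2 := by
    apply div_nonneg _ (by positivity)
    have hnum : (sq2+1)*γ*Real.sin θ*sq2 - (γ*S - 1)
        = γ*Real.sin θ*(1+sq2) + (1 - γ*Real.cos θ) := by
      rw [hSdef]; linear_combination (γ*Real.sin θ)*h2
    rw [hnum]
    have : 0 ≤ γ*Real.sin θ*(1+sq2) := by positivity
    linarith
  have he12 : e1 + e2 = 1 := by
    rw [he1def, he2def, hSdef, hddef, hSdef]
    field_simp
    linear_combination (γ*(Real.cos θ + Real.sin θ) - 1)*h2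
  have hE1 : e1 = η₀*(γ*Real.cos θ) + (1-η₀)*(-(1/sq2)) := by
    rw [he1def, hη₀def]
    field_simp
    ring
  have hE2 : e2 = η₀*(γ*Real.sin θ) + (1-η₀)*(-(1/sq2)) := by
    rw [he2def, hη₀def]
    field_simp
    ring
  -- the noise measurements and the joint observable
  refine ⟨fun z => st (fun i => -(ua i)) (sgn z), fun z => st (fun i => -(ub i)) (sgn z),
    isPOVM_st _ (by simpa [neg_pow] using le_of_eq ua_norm),
    isPOVM_st _ (by simpa [neg_pow] using le_of_eq ub_norm), ?_⟩
  refine ⟨fun p => if p.1 = p.2 then (e1:ℂ) • st ![(1:ℝ),0,0] (sgn p.1)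
      else (e2:ℂ) • st ![(0:ℝ),1,0] (sgn p.1), ⟨?_, ?_⟩, ?_, ?_⟩
  · rintro ⟨x, y⟩
    dsimp only
    by_cases hxy : x = y
    · rw [if_pos hxy]
      exact psd_smul_st e1 he1 _ _ (by cases x <;> simp [sgn])
    · rw [if_neg hxy]
      exact psd_smul_st e2 he2 _ _ (by cases x <;> simp [sgn])
  · rw [Fintype.sum_prod_type]
    simp only [Fintype.sum_bool]
    norm_num
    have hd1 : st ![(1:ℝ),0,0] (sgn true) + st ![(1:ℝ),0,0] (sgn false) = 1 :=
      (isPOVM_st_pair _ (by simp)).2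
    have hd2 : st ![(0:ℝ),1,0] (sgn true) + st ![(0:ℝ),1,0] (sgn false) = 1 :=
      (isPOVM_st_pair _ (by simp)).2
    have he12' : ((e1:ℂ) + (e2:ℂ)) = 1 := by
      rw [← Complex.ofReal_add, he12, Complex.ofReal_one]
    calc (e1:ℂ) • st ![(1:ℝ),0,0] (sgn true) + (e2:ℂ) • st ![(0:ℝ),1,0] (sgn true)
          + ((e2:ℂ) • st ![(0:ℝ),1,0] (sgn false) + (e1:ℂ) • st ![(1:ℝ),0,0] (sgn false))
        = (e1:ℂ) • (st ![(1:ℝ),0,0] (sgn true) + st ![(1:ℝ),0,0] (sgn false))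
          + (e2:ℂ) • (st ![(0:ℝ),1,0] (sgn true) + st ![(0:ℝ),1,0] (sgn false)) := by
          rw [smul_add, smul_add]; abel
      _ = ((e1:ℂ) + (e2:ℂ)) • (1 : Matrix (Fin 2) (Fin 2) ℂ) := by
          rw [hd1, hd2, add_smul]
      _ = 1 := by rw [he12', one_smul]
  · -- A margin
    intro x
    have he2' : e2 = 1 - e1 := by linarith
    have hsum : ∑ y : Bool, (if x = y then (e1:ℂ) • st ![(1:ℝ),0,0] (sgn x)
        else (e2:ℂ) • st ![(0:ℝ),1,0] (sgn x))
        = (e1:ℂ) • st ![(1:ℝ),0,0] (sgn x) + ((1 - e1 : ℝ):ℂ) • st ![(0:ℝ),1,0] (sgn x) := by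
      rw [Fintype.sum_bool, show ((1 - e1 : ℝ):ℂ) = (e2:ℂ) by rw [he2']]
      cases x <;> norm_num <;> abel
    show (η₀:ℂ) • st (γ • ![Real.cos θ, Real.sin θ, 0]) (sgn x)
        + ((1 - η₀ : ℝ):ℂ) • st (fun i => -(ua i)) (sgn x) = _
    rw [hsum, st_combo, st_combo]
    apply st_eq_of_eq
    intro i
    fin_cases i <;> simp [ua]
    · rw [hE1]; ring
    · rw [← he2', hE2]; ring
  · -- B margin
    intro y
    have he2' : e2 = 1 - e1 := by linarith
    have hsum : ∑ x : Bool, (if x = y then (e1:ℂ) • st ![(1:ℝ),0,0] (sgn x)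
        else (e2:ℂ) • st ![(0:ℝ),1,0] (sgn x))
        = (e1:ℂ) • st ![(1:ℝ),0,0] (sgn y)
          + ((1 - e1 : ℝ):ℂ) • st (fun i => -(![(0:ℝ),1,0] i)) (sgn y) := by
      rw [st_neg, Fintype.sum_bool, show ((1 - e1 : ℝ):ℂ) = (e2:ℂ) by rw [he2']]
      cases y <;> norm_num [sgn] <;> abel
    show (η₀:ℂ) • st (γ • ![Real.cos θ, -Real.sin θ, 0]) (sgn y)
        + ((1 - η₀ : ℝ):ℂ) • st (fun i => -(ub i)) (sgn y) = _
    rw [hsum, st_combo, st_combo]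
    apply st_eq_of_eq
    intro i
    fin_cases i <;> simp [ub]
    · rw [hE1]; ring
    · rw [show (e1 : ℝ) - 1 = -e2 from by linarith, hE2]; ring


/-- for `a = cosθ e₁ + sinθ e₂`, `b = cosθ e₁ − sinθ e₂` with `0 < θ < π/2`
and `1/(cosθ+sinθ) < γ ≤ 1`, the generalized incompatibility robustness of the noisy
unbiased qubit measurements `A_{γa}(±) = (I ± γ a·σ)/2`, `B_{γb}(±) = (I ± γ b·σ)/2` equals
`(√2+1)/(√2 + γ(cosθ+sinθ))`. -/
theorem stmt_18 (θ γ : ℝ) (hθ0 : 0 < θ) (hθ1 : θ < Real.pi / 2)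
    (hγ1 : γ ≤ 1) (hγ : 1 / (Real.cos θ + Real.sin θ) < γ) :
    etaG (fun z => st (γ • ![Real.cos θ, Real.sin θ, 0]) (sgn z))
        (fun z => st (γ • ![Real.cos θ, -Real.sin θ, 0]) (sgn z)) =
      (Real.sqrt 2 + 1) / (Real.sqrt 2 + γ * (Real.cos θ + Real.sin θ)) := by
  have h2 : Real.sqrt 2 ^ 2 = 2 := Real.sq_sqrt (by norm_num)
  have hsq2 : (0:ℝ) < Real.sqrt 2 := Real.sqrt_pos.mpr (by norm_num)
  have hc : 0 < Real.cos θ := Real.cos_pos_of_mem_Ioo ⟨by linarith [Real.pi_pos], hθ1⟩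
  have hs : 0 < Real.sin θ := Real.sin_pos_of_pos_of_lt_pi hθ0 (by linarith [Real.pi_pos])
  have hS : 0 < Real.cos θ + Real.sin θ := by positivity
  have hγ0 : 0 < γ := lt_trans (by positivity) hγ
  have hγS : 1 < γ * (Real.cos θ + Real.sin θ) := by
    rw [div_lt_iff₀ hS] at hγ
    linarith
  have hd : 0 < Real.sqrt 2 + γ * (Real.cos θ + Real.sin θ) := by positivity
  rw [etaG]
  apply IsGreatest.csSup_eq
  constructor
  · refine ⟨⟨by positivity, ?_⟩, ?_⟩
    · rw [div_le_one hd]; linarith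
    · exact mem_lemma θ γ hθ0 hθ1 hγ1 hγ
  · rintro η ⟨⟨hη0, hη1⟩, C, D, hC, hD, hcomp⟩
    have key := ub_main θ γ η hη0 hη1 C D hC hD hcomp
    rw [le_div_iff₀ hd]
    have heq1 : Real.sqrt 2*(η*(Real.sqrt 2 + γ*(Real.cos θ + Real.sin θ)))
        = η*(2 + Real.sqrt 2*γ*(Real.cos θ + Real.sin θ)) := by linear_combination η*h2
    have heq2 : Real.sqrt 2*(Real.sqrt 2 + 1) = 2 + Real.sqrt 2 := by linear_combination h2
    exact le_of_mul_le_mul_left (by rw [heq1, heq2]; exact key) hsq2
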